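/- arXiv:1507.05250 — 3 statements merged into one kernel-verified Lean document; each statement's English description precedes it below -/
import Mathlib

section
/- Let σ ≥ 1 and a > 0. For every δ with 0 < δ < 1 and every t with 0 ≤ t < a(1-δ)^σ/(2^σ - 1), one has the strict inequality 1 - δ > (1/2)^{1+1/σ} { [(1-δ)^σ - t/a]^{1/σ} + [(1-δ)^σ + (2^{σ+1}-1) t/a]^{1/σ} }. -/
open Real

/-- Convexity inequality for real exponents on nonnegative reals. -/
lemma real_rpow_add_le_mul_rpow_add_rpow (x y : ℝ) (hx : 0 ≤ x) (hy : 0 ≤ y) {p : ℝ}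
    (hp : 1 ≤ p) : (x + y) ^ p ≤ (2 : ℝ) ^ (p - 1) * (x ^ p + y ^ p) := by
  lift x to NNReal using hx
  lift y to NNReal using hy
  have h := NNReal.rpow_add_le_mul_rpow_add_rpow x y hp
  exact_mod_cast h

/-- Lemma 3.4 of the paper: for `σ ≥ 1`, `a > 0`, `0 < δ < 1` and
`0 ≤ t < a(1-δ)^σ/(2^σ-1)` one has
`1 - δ > (1/2)^{1+1/σ} ([(1-δ)^σ - t/a]^{1/σ} + [(1-δ)^σ + (2^{σ+1}-1) t/a]^{1/σ})`. -/
theorem ovsyannikov_aux_ineq (σ a δ t : ℝ) (hσ : 1 ≤ σ) (ha : 0 < a)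
    (hδ0 : 0 < δ) (hδ1 : δ < 1) (ht0 : 0 ≤ t)
    (ht : t < a * (1 - δ) ^ σ / ((2 : ℝ) ^ σ - 1)) :
    (1 / 2 : ℝ) ^ (1 + 1 / σ) *
        (((1 - δ) ^ σ - t / a) ^ (1 / σ) +
          ((1 - δ) ^ σ + ((2 : ℝ) ^ (σ + 1) - 1) * (t / a)) ^ (1 / σ)) <
      1 - δ := by
  have hσ0 : (0 : ℝ) < σ := lt_of_lt_of_le one_pos hσ
  have hσne : σ ≠ 0 := ne_of_gt hσ0
  set A : ℝ := (1 - δ) ^ σ with hAdef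
  set s : ℝ := t / a with hsdef
  have h1δ : (0 : ℝ) < 1 - δ := by linarith
  have hA : 0 < A := Real.rpow_pos_of_pos h1δ σ
  have hs0 : 0 ≤ s := div_nonneg ht0 ha.le
  have h2σ : (2 : ℝ) ≤ (2 : ℝ) ^ σ := by
    calc (2 : ℝ) = (2 : ℝ) ^ (1 : ℝ) := (Real.rpow_one 2).symm
    _ ≤ (2 : ℝ) ^ σ := Real.rpow_le_rpow_left_iff one_lt_two |>.2 hσ
  have h2σ1 : (0 : ℝ) < (2 : ℝ) ^ σ - 1 := by linarith
  have hs : ((2 : ℝ) ^ σ - 1) * s < A := by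
    have : s < A / ((2 : ℝ) ^ σ - 1) := by
      rw [hsdef, div_lt_iff₀ ha]
      calc t < a * A / ((2 : ℝ) ^ σ - 1) := ht
      _ = A / ((2 : ℝ) ^ σ - 1) * a := by ring
    calc ((2 : ℝ) ^ σ - 1) * s < ((2 : ℝ) ^ σ - 1) * (A / ((2 : ℝ) ^ σ - 1)) :=
      (mul_lt_mul_iff_right₀ h2σ1).2 this
    _ = A := by field_simp
  have hsA : s ≤ A := by nlinarith
  have hAs : 0 ≤ A - s := by linarith
  have h2σ1' : (2 : ℝ) ^ (σ + 1) - 1 = 2 * (2 : ℝ) ^ σ - 1 := by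
    rw [Real.rpow_add two_pos, Real.rpow_one]; ring
  have hy0 : 0 ≤ A + ((2 : ℝ) ^ (σ + 1) - 1) * s := by nlinarith
  set x : ℝ := (A - s) ^ (1 / σ)
  set y : ℝ := (A + ((2 : ℝ) ^ (σ + 1) - 1) * s) ^ (1 / σ)
  have hx0 : 0 ≤ x := Real.rpow_nonneg hAs _
  have hy0' : 0 ≤ y := Real.rpow_nonneg hy0 _
  have hxσ : x ^ σ = A - s := by
    rw [show x ^ σ = ((A - s) ^ (1/σ)) ^ σ from rfl, ← Real.rpow_mul hAs,
      one_div_mul_cancel hσne, Real.rpow_one]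
  have hyσ : y ^ σ = A + ((2 : ℝ) ^ (σ + 1) - 1) * s := by
    rw [show y ^ σ = ((A + ((2:ℝ)^(σ+1)-1)*s) ^ (1/σ)) ^ σ from rfl, ← Real.rpow_mul hy0,
      one_div_mul_cancel hσne, Real.rpow_one]
  have key : (x + y) ^ σ < (2 : ℝ) ^ (σ + 1) * A := by
    have h1 := real_rpow_add_le_mul_rpow_add_rpow x y hx0 hy0' hσ
    rw [hxσ, hyσ] at h1
    have h2 : (2 : ℝ) ^ (σ - 1) * ((A - s) + (A + ((2 : ℝ) ^ (σ + 1) - 1) * s))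
        = (2 : ℝ) ^ σ * (A + ((2 : ℝ) ^ σ - 1) * s) := by
      rw [h2σ1', Real.rpow_sub two_pos, Real.rpow_one]
      ring
    have h3 : (2 : ℝ) ^ σ * (A + ((2 : ℝ) ^ σ - 1) * s) < (2 : ℝ) ^ (σ + 1) * A := by
      rw [Real.rpow_add two_pos, Real.rpow_one]
      have h2σpos : (0 : ℝ) < (2 : ℝ) ^ σ := Real.rpow_pos_of_pos two_pos σ
      nlinarith
    calc (x + y) ^ σ ≤ (2 : ℝ) ^ (σ - 1) * ((A - s) + (A + ((2 : ℝ) ^ (σ + 1) - 1) * s)) := h1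
    _ = (2 : ℝ) ^ σ * (A + ((2 : ℝ) ^ σ - 1) * s) := h2
    _ < (2 : ℝ) ^ (σ + 1) * A := h3
  have hxy : x + y < (2 : ℝ) ^ (1 + 1 / σ) * (1 - δ) := by
    have hxy0 : 0 ≤ x + y := add_nonneg hx0 hy0'
    have h4 : ((x + y) ^ σ) ^ (1 / σ) < ((2 : ℝ) ^ (σ + 1) * A) ^ (1 / σ) :=
      Real.rpow_lt_rpow (Real.rpow_nonneg hxy0 σ) key (by positivity)
    rw [← Real.rpow_mul hxy0, mul_one_div, div_self hσne, Real.rpow_one] at h4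
    rw [Real.mul_rpow (Real.rpow_nonneg two_pos.le _) hA.le, ← Real.rpow_mul two_pos.le,
      hAdef, ← Real.rpow_mul h1δ.le] at h4
    have e1 : (σ + 1) * (1 / σ) = 1 + 1 / σ := by field_simp
    have e2 : σ * (1 / σ) = 1 := by field_simp
    rwa [e1, e2, Real.rpow_one] at h4
  have hhalf : (0 : ℝ) < (1 / 2 : ℝ) ^ (1 + 1 / σ) := Real.rpow_pos_of_pos one_half_pos _
  calc (1 / 2 : ℝ) ^ (1 + 1 / σ) * (x + y)
      < (1 / 2 : ℝ) ^ (1 + 1 / σ) * ((2 : ℝ) ^ (1 + 1 / σ) * (1 - δ)) :=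
        (mul_lt_mul_iff_right₀ hhalf).2 hxy
    _ = ((1 / 2 : ℝ) * 2) ^ (1 + 1 / σ) * (1 - δ) := by
        rw [Real.mul_rpow (by norm_num) two_pos.le]; ring
    _ = 1 - δ := by norm_num
end

section
/- Let σ ≥ 1, a > 0, 0 < δ < 1 and 0 ≤ t < a(1-δ)^σ/(2^σ - 1). For τ ∈ [0, t] define δ(τ) = (1/2)(1+δ) + (1/2)^{2+1/σ} { [(1-δ)^σ - τ/a]^{1/σ} - [(1-δ)^σ + (2^{σ+1}-1) τ/a]^{1/σ} }. Then for every τ ∈ [0, t]: (i) δ(τ) - δ ≥ (1/2)^{1+1/σ} [(1-δ)^σ - τ/a]^{1/σ}; (ii) 1 - δ(τ) ≥ (1/2)^{1+1/σ} [(1-δ)^σ + (2^{σ+1}-1) τ/a]^{1/σ}; and (iii) a(1-δ(τ))^σ - τ ≥ (1/2)^{σ+1} (a(1-δ)^σ - τ). -/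
open Real

private lemma aux_two_pow (x y : ℝ) (hx : 0 ≤ x) (hy : 0 ≤ y) {p : ℝ} (hp : 1 ≤ p) :
    (x + y) ^ p ≤ 2 ^ (p - 1) * (x ^ p + y ^ p) := by
  have h := NNReal.rpow_add_le_mul_rpow_add_rpow x.toNNReal y.toNNReal hp
  have h2 := NNReal.coe_le_coe.2 h
  push_cast [Real.coe_toNNReal _ hx, Real.coe_toNNReal _ hy] at h2
  exact h2

private lemma aux_key (A B C σ : ℝ) (hA : 0 ≤ A) (hB : 0 ≤ B) (hC : 0 ≤ C)
    (hσ : 1 ≤ σ) (hAB : A + B ≤ 4 * C ^ σ) :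
    A ^ (1/σ) + B ^ (1/σ) ≤ 2 ^ (1 + 1/σ) * C := by
  have hσ0 : 0 < σ := lt_of_lt_of_le one_pos hσ
  set u := A ^ (1/σ) with hu_def
  set v := B ^ (1/σ) with hv_def
  have hu : 0 ≤ u := Real.rpow_nonneg hA _
  have hv : 0 ≤ v := Real.rpow_nonneg hB _
  have hinv : (1/σ) * σ = 1 := by field_simp
  have huσ : u ^ σ = A := by
    rw [hu_def, ← Real.rpow_mul hA, hinv, Real.rpow_one]
  have hvσ : v ^ σ = B := by
    rw [hv_def, ← Real.rpow_mul hB, hinv, Real.rpow_one]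
  have h4 : (2:ℝ) ^ (2:ℝ) = 4 := by
    rw [show (2:ℝ) = ((2:ℕ):ℝ) by norm_num, Real.rpow_natCast]; norm_num
  have hpow : (2:ℝ) ^ (σ+1) = 2 ^ (σ-1) * 4 := by
    rw [show σ + 1 = (σ-1) + 2 by ring, Real.rpow_add two_pos, h4]
  have h1 : (u + v) ^ σ ≤ (2 ^ (1 + 1/σ) * C) ^ σ := by
    have := aux_two_pow u v hu hv hσ
    rw [huσ, hvσ] at this
    have h2 : (2:ℝ) ^ (σ-1) * (A + B) ≤ 2 ^ (σ+1) * C ^ σ := by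
      rw [hpow]
      have := mul_le_mul_of_nonneg_left hAB (le_of_lt (Real.rpow_pos_of_pos two_pos (σ-1)))
      linarith
    have h3 : ((2:ℝ) ^ (1 + 1/σ) * C) ^ σ = 2 ^ (σ+1) * C ^ σ := by
      rw [Real.mul_rpow (le_of_lt (Real.rpow_pos_of_pos two_pos _)) hC,
        ← Real.rpow_mul (by norm_num : (0:ℝ) ≤ 2)]
      congr 1
      rw [show (1 + 1/σ) * σ = σ + (1/σ)*σ by ring, hinv]
    rw [h3]
    linarith
  have hrhs : 0 ≤ (2:ℝ) ^ (1 + 1/σ) * C :=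
    mul_nonneg (le_of_lt (Real.rpow_pos_of_pos two_pos _)) hC
  exact (Real.rpow_le_rpow_iff (by positivity) hrhs hσ0).mp h1

/-- Inequalities (3.7), (3.8) and (3.10) from the proof of Lemma 3.5 of the paper,
for the auxiliary function
`δ(τ) = (1/2)(1+δ) + (1/2)^{2+1/σ} ([(1-δ)^σ - τ/a]^{1/σ} - [(1-δ)^σ + (2^{σ+1}-1)τ/a]^{1/σ})`. -/
theorem ovsyannikov_delta_bounds (σ a δ t : ℝ) (hσ : 1 ≤ σ) (ha : 0 < a)
    (hδ0 : 0 < δ) (hδ1 : δ < 1) (ht0 : 0 ≤ t)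
    (ht : t < a * (1 - δ) ^ σ / ((2 : ℝ) ^ σ - 1))
    (dlt : ℝ → ℝ)
    (hdlt : ∀ τ : ℝ, dlt τ =
      (1 / 2) * (1 + δ) + (1 / 2 : ℝ) ^ (2 + 1 / σ) *
        (((1 - δ) ^ σ - τ / a) ^ (1 / σ) -
          ((1 - δ) ^ σ + ((2 : ℝ) ^ (σ + 1) - 1) * (τ / a)) ^ (1 / σ))) :
    ∀ τ ∈ Set.Icc (0 : ℝ) t,
      (1 / 2 : ℝ) ^ (1 + 1 / σ) * ((1 - δ) ^ σ - τ / a) ^ (1 / σ) ≤ dlt τ - δ ∧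
      (1 / 2 : ℝ) ^ (1 + 1 / σ) *
          ((1 - δ) ^ σ + ((2 : ℝ) ^ (σ + 1) - 1) * (τ / a)) ^ (1 / σ) ≤ 1 - dlt τ ∧
      (1 / 2 : ℝ) ^ (σ + 1) * (a * (1 - δ) ^ σ - τ) ≤ a * (1 - dlt τ) ^ σ - τ := by
  intro τ hτ
  obtain ⟨hτ0, hτt⟩ := hτ
  have hσ0 : 0 < σ := lt_of_lt_of_le one_pos hσ
  have h1δ : (0:ℝ) < 1 - δ := by linarith
  have hCσ : (0:ℝ) < (1 - δ) ^ σ := Real.rpow_pos_of_pos h1δ σ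
  -- 2^σ ≥ 2
  have h2σ : (2:ℝ) ≤ 2 ^ σ := by
    calc (2:ℝ) = 2 ^ (1:ℝ) := (Real.rpow_one 2).symm
    _ ≤ 2 ^ σ := Real.rpow_le_rpow_left_iff one_lt_two |>.mpr hσ
  have h2σ1 : (1:ℝ) ≤ 2 ^ σ - 1 := by linarith
  have h2σ1' : (0:ℝ) < 2 ^ σ - 1 := by linarith
  -- 2^(σ+1) = 2 * 2^σ
  have h2σp1 : (2:ℝ) ^ (σ+1) = 2 ^ σ * 2 := by
    rw [Real.rpow_add two_pos, Real.rpow_one]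
  -- key bound on τ
  have htkey : τ * (2 ^ σ - 1) < a * (1 - δ) ^ σ := by
    have h1 : t * (2 ^ σ - 1) < a * (1 - δ) ^ σ := (lt_div_iff₀ h2σ1').mp ht
    nlinarith [mul_le_mul_of_nonneg_right hτt (le_of_lt h2σ1')]
  have hτa0 : 0 ≤ τ / a := div_nonneg hτ0 (le_of_lt ha)
  have hτalt : τ / a * (2 ^ σ - 1) < (1 - δ) ^ σ := by
    rw [div_mul_eq_mul_div, div_lt_iff₀ ha]
    nlinarith
  have hτa1 : τ / a ≤ (1 - δ) ^ σ := by nlinarith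
  set A := (1 - δ) ^ σ - τ / a with hA_def
  set B := (1 - δ) ^ σ + ((2:ℝ) ^ (σ + 1) - 1) * (τ / a) with hB_def
  have hA0 : 0 ≤ A := by rw [hA_def]; linarith
  have hB0 : 0 ≤ B := by
    rw [hB_def]
    have : (0:ℝ) ≤ ((2:ℝ) ^ (σ + 1) - 1) * (τ / a) := by nlinarith
    linarith
  have hAB : A + B ≤ 4 * (1 - δ) ^ σ := by
    rw [hA_def, hB_def]
    have : ((2:ℝ) ^ (σ + 1) - 2) * (τ / a) ≤ 2 * (1 - δ) ^ σ := by
      rw [h2σp1]; nlinarith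
    linarith
  have key := aux_key A B (1 - δ) σ hA0 hB0 (le_of_lt h1δ) hσ hAB
  -- (1/2)^(2+1/σ) * 2^(1+1/σ) = 1/2
  have hq0 : 0 < 1/σ := by positivity
  have hhalf : ∀ p : ℝ, (1/2:ℝ) ^ p = ((2:ℝ) ^ p)⁻¹ := by
    intro p
    rw [one_div, Real.inv_rpow (by norm_num : (0:ℝ) ≤ 2)]
  have hcc : (1/2:ℝ) ^ (2 + 1/σ) * (2:ℝ) ^ (1 + 1/σ) = 1/2 := by
    rw [hhalf, ← Real.rpow_neg (by norm_num : (0:ℝ) ≤ 2), ← Real.rpow_add two_pos,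
      show -(2 + 1/σ) + (1 + 1/σ) = (-1 : ℝ) by ring, Real.rpow_neg_one]
    norm_num
  have hc2 : (1/2:ℝ) ^ (1 + 1/σ) = 2 * (1/2) ^ (2 + 1/σ) := by
    have h21 : (2:ℝ) ^ (2 + 1/σ) = 2 * 2 ^ (1 + 1/σ) := by
      rw [show (2:ℝ) + 1/σ = 1 + (1 + 1/σ) by ring, Real.rpow_add two_pos, Real.rpow_one]
    rw [hhalf, hhalf, h21, mul_inv, ← mul_assoc, mul_inv_cancel₀ two_ne_zero, one_mul]
  have hcpos : (0:ℝ) < (1/2:ℝ) ^ (2 + 1/σ) := Real.rpow_pos_of_pos (by norm_num) _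
  -- main estimate
  have hmain : (1/2:ℝ) ^ (2 + 1/σ) * (A ^ (1/σ) + B ^ (1/σ)) ≤ (1/2) * (1 - δ) := by
    calc (1/2:ℝ) ^ (2 + 1/σ) * (A ^ (1/σ) + B ^ (1/σ))
        ≤ (1/2:ℝ) ^ (2 + 1/σ) * (2 ^ (1 + 1/σ) * (1 - δ)) :=
          mul_le_mul_of_nonneg_left key (le_of_lt hcpos)
      _ = ((1/2:ℝ) ^ (2 + 1/σ) * 2 ^ (1 + 1/σ)) * (1 - δ) := by ring
      _ = (1/2) * (1 - δ) := by rw [hcc]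
  have hApow : 0 ≤ A ^ (1/σ) := Real.rpow_nonneg hA0 _
  have hBpow : 0 ≤ B ^ (1/σ) := Real.rpow_nonneg hB0 _
  have hd := hdlt τ
  rw [← hA_def, ← hB_def] at hd
  -- (i)
  have part1 : (1/2:ℝ) ^ (1 + 1/σ) * A ^ (1/σ) ≤ dlt τ - δ := by
    rw [hd, hc2]; linarith
  -- (ii)
  have part2 : (1/2:ℝ) ^ (1 + 1/σ) * B ^ (1/σ) ≤ 1 - dlt τ := by
    rw [hd, hc2]; linarith
  refine ⟨part1, part2, ?_⟩
  -- (iii)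
  have hlhs0 : 0 ≤ (1/2:ℝ) ^ (1 + 1/σ) * B ^ (1/σ) :=
    mul_nonneg (le_of_lt (Real.rpow_pos_of_pos (by norm_num) _)) hBpow
  have hmono : ((1/2:ℝ) ^ (1 + 1/σ) * B ^ (1/σ)) ^ σ ≤ (1 - dlt τ) ^ σ :=
    Real.rpow_le_rpow hlhs0 part2 (le_of_lt hσ0)
  have hinv : (1/σ) * σ = 1 := by field_simp
  have heq : ((1/2:ℝ) ^ (1 + 1/σ) * B ^ (1/σ)) ^ σ = (1/2) ^ (σ+1) * B := by
    rw [Real.mul_rpow (le_of_lt (Real.rpow_pos_of_pos (by norm_num) _)) hBpow,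
      ← Real.rpow_mul (by norm_num : (0:ℝ) ≤ 1/2), ← Real.rpow_mul hB0,
      hinv, Real.rpow_one, show (1 + 1/σ) * σ = σ + (1/σ)*σ by ring, hinv]
  rw [heq] at hmono
  have haB : a * B = a * (1 - δ) ^ σ + ((2:ℝ) ^ (σ + 1) - 1) * τ := by
    rw [hB_def]; field_simp
  have hmono2 : a * ((1/2) ^ (σ+1) * B) ≤ a * (1 - dlt τ) ^ σ :=
    mul_le_mul_of_nonneg_left hmono (le_of_lt ha)
  have hps : (1/2:ℝ) ^ (σ+1) * (2:ℝ) ^ (σ+1) = 1 := by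
    rw [hhalf]
    exact inv_mul_cancel₀ (ne_of_gt (Real.rpow_pos_of_pos two_pos _))
  have hexp : a * ((1/2:ℝ) ^ (σ+1) * B) = (1/2:ℝ) ^ (σ+1) * (a * (1 - δ) ^ σ - τ) + τ := by
    linear_combination ((1/2:ℝ) ^ (σ+1)) * haB + τ * hps
  linarith [hexp ▸ hmono2]
end

section
/- Let σ ≥ 1, a > 0, K ≥ 0, 0 < δ < 1 and 0 ≤ t < a(1-δ)^σ/(2^σ - 1). For τ ∈ [0, t] define δ(τ) = (1/2)(1+δ) + (1/2)^{2+1/σ} { [(1-δ)^σ - τ/a]^{1/σ} - [(1-δ)^σ + (2^{σ+1}-1) τ/a]^{1/σ} }, and note δ < δ(τ) < 1. Suppose h : [0, t] → [0, ∞) is a measurable function satisfying h(τ) ≤ K / ( (1-δ(τ))^σ √(1 - τ/(a(1-δ(τ))^σ)) ) for all τ ∈ [0, t]. Then ∫₀ᵗ h(τ)/(δ(τ) - δ)^σ dτ ≤ (a · 2^{2σ+3} K / (1-δ)^σ) · √( a(1-δ)^σ / (a(1-δ)^σ - t) ). -/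
set_option maxHeartbeats 800000

open MeasureTheory

lemma ovs_pm {x y s : ℝ} (hx : 0 ≤ x) (hy : 0 ≤ y) (hs : 0 < s) (hs1 : s ≤ 1) :
    x ^ s + y ^ s ≤ (2 : ℝ) ^ (1 - s) * (x + y) ^ s := by
  have hp : 1 ≤ 1 / s := (le_div_iff₀ hs).2 (by linarith)
  have h0 : (0:ℝ) ≤ x ^ s + y ^ s := by positivity
  have hxs : (x ^ s) ^ (1/s) = x := by
    rw [← Real.rpow_mul hx]; field_simp; simp
  have hys : (y ^ s) ^ (1/s) = y := by
    rw [← Real.rpow_mul hy]; field_simp; simp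
  have key := NNReal.rpow_add_le_mul_rpow_add_rpow (x.toNNReal ^ s) (y.toNNReal ^ s) hp
  have key' : (x ^ s + y ^ s) ^ (1/s) ≤ (2:ℝ) ^ (1/s - 1) * (x + y) := by
    have h2 := NNReal.coe_le_coe.2 key
    push_cast [NNReal.coe_rpow] at h2
    rw [Real.coe_toNNReal x hx, Real.coe_toNNReal y hy, hxs, hys] at h2
    exact h2
  have hmon := Real.rpow_le_rpow (by positivity) key' hs.le
  rw [← Real.rpow_mul h0, one_div_mul_cancel hs.ne', Real.rpow_one,
    Real.mul_rpow (by positivity) (by linarith), ← Real.rpow_mul (by norm_num)] at hmon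
  have : (1/s - 1) * s = 1 - s := by field_simp
  rwa [this] at hmon

/-- Lemma 3.5 of the paper (scalar form): if `h : [0,t] → [0,∞)` is measurable and satisfies
`h(τ) ≤ K / ((1-δ(τ))^σ √(1 - τ/(a(1-δ(τ))^σ)))`, then
`∫₀ᵗ h(τ)/(δ(τ)-δ)^σ dτ ≤ (a 2^{2σ+3} K/(1-δ)^σ) √(a(1-δ)^σ/(a(1-δ)^σ - t))`. -/
theorem ovsyannikov_integral_bound (σ a K δ t : ℝ) (hσ : 1 ≤ σ) (ha : 0 < a) (hK : 0 ≤ K)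
    (hδ0 : 0 < δ) (hδ1 : δ < 1) (ht0 : 0 ≤ t)
    (ht : t < a * (1 - δ) ^ σ / ((2 : ℝ) ^ σ - 1))
    (dlt : ℝ → ℝ)
    (hdlt : ∀ τ : ℝ, dlt τ =
      (1 / 2) * (1 + δ) + (1 / 2 : ℝ) ^ (2 + 1 / σ) *
        (((1 - δ) ^ σ - τ / a) ^ (1 / σ) -
          ((1 - δ) ^ σ + ((2 : ℝ) ^ (σ + 1) - 1) * (τ / a)) ^ (1 / σ)))
    (h : ℝ → ℝ)
    (hmeas : AEMeasurable h (volume.restrict (Set.Icc (0 : ℝ) t)))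
    (hnn : ∀ τ ∈ Set.Icc (0 : ℝ) t, 0 ≤ h τ)
    (hbound : ∀ τ ∈ Set.Icc (0 : ℝ) t,
      h τ ≤ K / ((1 - dlt τ) ^ σ * Real.sqrt (1 - τ / (a * (1 - dlt τ) ^ σ)))) :
    ∫ τ in (0 : ℝ)..t, h τ / (dlt τ - δ) ^ σ ≤
      a * (2 : ℝ) ^ (2 * σ + 3) * K / (1 - δ) ^ σ *
        Real.sqrt (a * (1 - δ) ^ σ / (a * (1 - δ) ^ σ - t)) := by
  have hσ0 : 0 < σ := lt_of_lt_of_le one_pos hσ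
  set s : ℝ := 1 / σ with hs_def
  have hs : 0 < s := by positivity
  have hs1 : s ≤ 1 := by rw [hs_def]; rw [div_le_one hσ0]; exact hσ
  have h1δ : 0 < 1 - δ := by linarith
  set b : ℝ := (1 - δ) ^ σ with hb_def
  have hb : 0 < b := Real.rpow_pos_of_pos h1δ σ
  have hbs : b ^ s = 1 - δ := by
    rw [hb_def, ← Real.rpow_mul h1δ.le, mul_one_div, div_self hσ0.ne', Real.rpow_one]
  have h2σ : (2:ℝ) ≤ (2:ℝ) ^ σ := by
    calc (2:ℝ) = (2:ℝ) ^ (1:ℝ) := (Real.rpow_one 2).symm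
    _ ≤ (2:ℝ) ^ σ := Real.rpow_le_rpow_of_exponent_le one_le_two hσ
  have h2σ1 : (1:ℝ) ≤ (2:ℝ) ^ σ - 1 := by linarith
  have htb : t * ((2:ℝ) ^ σ - 1) < a * b := by
    rw [← lt_div_iff₀ (by linarith)]; exact ht
  have htab : t < a * b := lt_of_le_of_lt (le_mul_of_one_le_right ht0 h2σ1) htb
  have h2σ2 : (2:ℝ) ^ (σ + 1) = 2 * (2:ℝ) ^ σ := by
    rw [Real.rpow_add two_pos, Real.rpow_one]; ring
  set E : ℝ := (2:ℝ) ^ (-(σ + 1)) with hE_def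
  have hE : 0 < E := Real.rpow_pos_of_pos two_pos _
  have hE2 : E * (2:ℝ) ^ (σ + 1) = 1 := by
    rw [hE_def, ← Real.rpow_add two_pos, neg_add_cancel, Real.rpow_zero]
  set c : ℝ := (1/2 : ℝ) ^ (2 + s) with hc_def
  have hc : 0 < c := Real.rpow_pos_of_pos one_half_pos _
  have hc2 : c = (2:ℝ) ^ (-(2 + s)) := by
    rw [hc_def, one_div, ← Real.rpow_neg_one (2:ℝ),
      ← Real.rpow_mul (by norm_num : (0:ℝ) ≤ 2)]
    congr 1; ring
  have h2c : 2 * c = (2:ℝ) ^ (-(1 + s)) := by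
    rw [hc2, show (-(1 + s):ℝ) = 1 + -(2 + s) by ring, Real.rpow_add two_pos, Real.rpow_one]
  have h42 : ((4:ℝ) * b) ^ s = (2:ℝ) ^ (2 * s) * b ^ s := by
    rw [show (4:ℝ) * b = (2:ℝ) ^ (2:ℝ) * b by norm_num [show ((2:ℕ):ℝ) = (2:ℝ) from by norm_num, ← Real.rpow_natCast (2:ℝ) 2],
      Real.mul_rpow (by positivity) hb.le, ← Real.rpow_mul (by norm_num)]
  clear_value s b E c
  -- the pointwise facts
  have key : ∀ τ ∈ Set.Icc (0:ℝ) t,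
      0 < dlt τ - δ ∧ dlt τ < 1 ∧
      E * ((a * b - τ) / a) ≤ (dlt τ - δ) ^ σ ∧
      E * b ≤ (1 - dlt τ) ^ σ ∧
      E * (a * b - τ) ≤ a * (1 - dlt τ) ^ σ - τ ∧
      (1 - dlt τ) ^ σ ≤ 1 := by
    intro τ hτ
    obtain ⟨hτ0, hτt⟩ := hτ
    set A : ℝ := b - τ / a with hA_def
    set B : ℝ := b + ((2:ℝ) ^ (σ + 1) - 1) * (τ / a) with hB_def
    clear_value A B
    have hτab : τ * ((2:ℝ) ^ σ - 1) < a * b :=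
      lt_of_le_of_lt (mul_le_mul_of_nonneg_right hτt (by linarith)) htb
    have hτab' : τ < a * b := lt_of_le_of_lt (le_mul_of_one_le_right hτ0 h2σ1) hτab
    have hA : 0 < A := by
      rw [hA_def, sub_pos, div_lt_iff₀ ha]; linarith
    have hB : b ≤ B := by
      have h9 : 0 ≤ ((2:ℝ) ^ (σ + 1) - 1) * (τ / a) :=
        mul_nonneg (by nlinarith) (div_nonneg hτ0 ha.le)
      rw [hB_def]; linarith
    have hr : ((2:ℝ) ^ σ - 1) * (τ / a) < b := by
      rw [mul_comm, div_mul_eq_mul_div, div_lt_iff₀ ha]; linarith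
    have hABsum : A + B ≤ 4 * b := by
      rw [hA_def, hB_def, h2σ2]; nlinarith [hr]
    have hpm : A ^ s + B ^ s ≤ (2:ℝ) ^ (1 - s) * (A + B) ^ s :=
      ovs_pm hA.le (le_trans hb.le hB) hs hs1
    have h4b : (A + B) ^ s ≤ ((4:ℝ) * b) ^ s :=
      Real.rpow_le_rpow (by linarith) hABsum hs.le
    have hAB2 : A ^ s + B ^ s ≤ (2:ℝ) ^ (1 + s) * b ^ s := by
      have h7 : (2:ℝ) ^ (1 - s) * ((2:ℝ) ^ (2 * s) * b ^ s) = (2:ℝ) ^ (1 + s) * b ^ s := by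
        rw [← mul_assoc, ← Real.rpow_add two_pos]
        congr 2; ring
      calc A ^ s + B ^ s ≤ (2:ℝ) ^ (1 - s) * ((4:ℝ) * b) ^ s := by
            refine le_trans hpm ?_
            exact mul_le_mul_of_nonneg_left h4b (by positivity)
        _ = (2:ℝ) ^ (1 + s) * b ^ s := by rw [h42, h7]
    have hcsum : c * A ^ s + c * B ^ s ≤ (1 - δ) / 2 := by
      have h8 : c * ((2:ℝ) ^ (1 + s) * b ^ s) = (1 / 2) * b ^ s := by
        rw [hc2, ← mul_assoc, ← Real.rpow_add two_pos,
          show (-(2 + s) + (1 + s) : ℝ) = -1 by ring, Real.rpow_neg_one]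
        norm_num
      have h9 := mul_le_mul_of_nonneg_left hAB2 hc.le
      rw [mul_add] at h9
      rw [hbs] at h8 h9
      linarith
    have hAs : 0 < A ^ s := Real.rpow_pos_of_pos hA s
    have hBs : 0 < B ^ s := Real.rpow_pos_of_pos (lt_of_lt_of_le hb hB) s
    have hd1 : 2 * c * A ^ s ≤ dlt τ - δ := by
      rw [hdlt τ, ← hA_def, ← hB_def]; linarith [hcsum]
    have hd2 : 2 * c * B ^ s ≤ 1 - dlt τ := by
      rw [hdlt τ, ← hA_def, ← hB_def]; linarith [hcsum]
    have hdpos : 0 < dlt τ - δ := lt_of_lt_of_le (mul_pos (mul_pos two_pos hc) hAs) hd1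
    have hdlt1 : dlt τ < 1 := by linarith [hd2, mul_pos hc hBs]
    have hdltpos : 0 < dlt τ := by linarith
    have hsσ : s * σ = 1 := by rw [hs_def]; field_simp
    have h6 : ∀ x : ℝ, 0 < x → (2 * c * x ^ s) ^ σ = E * x := by
      intro x hx
      rw [Real.mul_rpow (mul_nonneg (by norm_num) hc.le) (Real.rpow_nonneg hx.le s), h2c,
        ← Real.rpow_mul (by norm_num : (0:ℝ) ≤ 2), ← Real.rpow_mul hx.le,
        show (-(1 + s)) * σ = -(σ + 1) by rw [hs_def]; field_simp,
        hsσ, Real.rpow_one, hE_def]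
    have hP1 : E * ((a * b - τ) / a) ≤ (dlt τ - δ) ^ σ := by
      have h5 : (2 * c * A ^ s) ^ σ ≤ (dlt τ - δ) ^ σ :=
        Real.rpow_le_rpow (mul_nonneg (mul_nonneg (by norm_num) hc.le) hAs.le) hd1 hσ0.le
      rw [h6 A hA] at h5
      have hA_eq : A = (a * b - τ) / a := by rw [hA_def]; field_simp
      rwa [hA_eq] at h5
    have hP2 : E * B ≤ (1 - dlt τ) ^ σ := by
      have h5 : (2 * c * B ^ s) ^ σ ≤ (1 - dlt τ) ^ σ :=
        Real.rpow_le_rpow (mul_nonneg (mul_nonneg (by norm_num) hc.le) hBs.le) hd2 hσ0.le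
      rwa [h6 B (lt_of_lt_of_le hb hB)] at h5
    have hP2' : E * b ≤ (1 - dlt τ) ^ σ :=
      le_trans (mul_le_mul_of_nonneg_left hB hE.le) hP2
    have hP3 : E * (a * b - τ) ≤ a * (1 - dlt τ) ^ σ - τ := by
      have h5 := mul_le_mul_of_nonneg_left hP2 ha.le
      have hid : a * (E * B) - τ = E * (a * b - τ) := by
        rw [hB_def]
        field_simp
        linear_combination τ * hE2
      linarith
    have hP4 : (1 - dlt τ) ^ σ ≤ 1 :=
      Real.rpow_le_one (by linarith) (by linarith) hσ0.le
    exact ⟨hdpos, hdlt1, hP1, hP2', hP3, hP4⟩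
  have hEE : (2:ℝ) ^ (2 * σ + 2) * (E * E) = 1 := by
    rw [hE_def, ← Real.rpow_add two_pos, ← Real.rpow_add two_pos,
      show (2 * σ + 2 + (-(σ + 1) + -(σ + 1)) : ℝ) = 0 by ring, Real.rpow_zero]
  have hsa : 0 < Real.sqrt a := Real.sqrt_pos.2 ha
  have hsb : 0 < Real.sqrt b := Real.sqrt_pos.2 hb
  set C0 : ℝ := K * (2:ℝ) ^ (2 * σ + 2) * a * Real.sqrt a / Real.sqrt b with hC0_def
  have hC0 : 0 ≤ C0 := by
    rw [hC0_def]
    have h2p : (0:ℝ) < (2:ℝ) ^ (2 * σ + 2) := Real.rpow_pos_of_pos two_pos _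
    positivity
  have bnd : ∀ τ ∈ Set.Icc (0:ℝ) t,
      h τ / (dlt τ - δ) ^ σ ≤ C0 * (a * b - τ) ^ (-(3/2) : ℝ) := by
    intro τ hτ
    obtain ⟨hd, hd1, hP1, hP2, hP3, hP4⟩ := key τ hτ
    have hτ' := hτ
    obtain ⟨hτ0, hτt⟩ := hτ'
    set P : ℝ := (1 - dlt τ) ^ σ with hP_def
    have hP0 : 0 < P := lt_of_lt_of_le (mul_pos hE hb) hP2
    have habτ : 0 < a * b - τ := by linarith
    have haP : 0 < a * P := mul_pos ha hP0
    have hsP : 0 < Real.sqrt P := Real.sqrt_pos.2 hP0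
    have hsbτ : 0 < Real.sqrt (a * b - τ) := Real.sqrt_pos.2 habτ
    clear_value P
    have hsq : 1 - τ / (a * P) = (a * P - τ) / (a * P) := by field_simp
    have hid2 : P * (a * P - τ) / a = P ^ 2 * (1 - τ / (a * P)) := by
      field_simp
    have hDeq : P * Real.sqrt (1 - τ / (a * P)) = Real.sqrt (P * (a * P - τ) / a) := by
      rw [hid2, Real.sqrt_mul (sq_nonneg P), Real.sqrt_sq hP0.le]
    have hDlow : Real.sqrt (E * b * (E * (a * b - τ)) / a) ≤
        P * Real.sqrt (1 - τ / (a * P)) := by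
      rw [hDeq]
      apply Real.sqrt_le_sqrt
      exact (div_le_div_iff_of_pos_right ha).2
        (mul_le_mul hP2 hP3 (mul_nonneg hE.le habτ.le) hP0.le)
    have hD'eq : Real.sqrt (E * b * (E * (a * b - τ)) / a) =
        E * (Real.sqrt b * Real.sqrt (a * b - τ)) / Real.sqrt a := by
      rw [Real.sqrt_div (by positivity) a,
        show E * b * (E * (a * b - τ)) = E ^ 2 * (b * (a * b - τ)) by ring,
        Real.sqrt_mul (sq_nonneg E), Real.sqrt_sq hE.le, Real.sqrt_mul hb.le]
    have hD'pos : 0 < E * (Real.sqrt b * Real.sqrt (a * b - τ)) / Real.sqrt a := by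
      positivity
    have hhτ : h τ ≤ K / (E * (Real.sqrt b * Real.sqrt (a * b - τ)) / Real.sqrt a) := by
      refine le_trans (hbound τ hτ) ?_
      rw [← hP_def]
      exact div_le_div_of_nonneg_left hK hD'pos (by rw [← hD'eq]; exact hDlow)
    have hfinal : h τ / (dlt τ - δ) ^ σ ≤
        (K / (E * (Real.sqrt b * Real.sqrt (a * b - τ)) / Real.sqrt a)) /
          (E * ((a * b - τ) / a)) :=
      div_le_div₀ (div_nonneg hK hD'pos.le) hhτ (mul_pos hE (div_pos habτ ha)) hP1
    refine le_trans hfinal (le_of_eq ?_)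
    have hrw : (a * b - τ) ^ (-(3/2) : ℝ) = ((a * b - τ) * Real.sqrt (a * b - τ))⁻¹ := by
      rw [Real.rpow_neg habτ.le, show (3/2 : ℝ) = 1 + 1/2 by norm_num,
        Real.rpow_add habτ, Real.rpow_one, ← Real.sqrt_eq_rpow]
    rw [hrw, hC0_def]
    have hEne : E ≠ 0 := ne_of_gt hE
    have hmulself : Real.sqrt (a * b - τ) * Real.sqrt (a * b - τ) = a * b - τ :=
      Real.mul_self_sqrt habτ.le
    field_simp
    have h22 : (2:ℝ) ^ (2 * (σ + 1)) = (2:ℝ) ^ (2 * σ + 2) := by ring_nf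
    linear_combination (-K) * hEE - K * E ^ 2 * h22
  -- measurability / integrability
  have hcont_dlt : Continuous dlt := by
    have hfe : dlt = fun τ => 1 / 2 * (1 + δ) +
        c * ((b - τ / a) ^ s - (b + ((2:ℝ) ^ (σ + 1) - 1) * (τ / a)) ^ s) := funext hdlt
    rw [hfe]
    have c1 : Continuous fun τ : ℝ => b - τ / a := by continuity
    have c2 : Continuous fun τ : ℝ => b + ((2:ℝ) ^ (σ + 1) - 1) * (τ / a) := by continuity
    exact continuous_const.add (continuous_const.mul
      (((Real.continuous_rpow_const hs.le).comp c1).sub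
        ((Real.continuous_rpow_const hs.le).comp c2)))
  have hcont_den : Continuous fun τ => (dlt τ - δ) ^ σ :=
    (Real.continuous_rpow_const hσ0.le).comp (hcont_dlt.sub continuous_const)
  have hfmeas : AEStronglyMeasurable (fun τ => h τ / (dlt τ - δ) ^ σ)
      (volume.restrict (Set.Icc (0:ℝ) t)) :=
    (hmeas.div hcont_den.measurable.aemeasurable).aestronglyMeasurable
  have hgcont : ContinuousOn (fun τ : ℝ => C0 * (a * b - τ) ^ (-(3/2) : ℝ))
      (Set.Icc (0:ℝ) t) := by
    apply continuousOn_const.mul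
    apply ContinuousOn.rpow_const (continuous_const.sub continuous_id).continuousOn
    intro x hx
    left
    have hx2 : x ≤ t := hx.2
    have : 0 < a * b - x := by linarith
    exact ne_of_gt this
  have hgint : IntegrableOn (fun τ : ℝ => C0 * (a * b - τ) ^ (-(3/2) : ℝ))
      (Set.Icc (0:ℝ) t) := hgcont.integrableOn_Icc
  have hfnn : ∀ τ ∈ Set.Icc (0:ℝ) t, 0 ≤ h τ / (dlt τ - δ) ^ σ := fun τ hτ =>
    div_nonneg (hnn τ hτ) (Real.rpow_nonneg (le_of_lt (key τ hτ).1) σ)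
  have hfint : IntegrableOn (fun τ => h τ / (dlt τ - δ) ^ σ) (Set.Icc (0:ℝ) t) := by
    refine Integrable.mono' hgint hfmeas ?_
    rw [ae_restrict_iff' measurableSet_Icc]
    filter_upwards with τ hτ
    rw [Real.norm_eq_abs, abs_of_nonneg (hfnn τ hτ)]
    exact bnd τ hτ
  have hmono := intervalIntegral.integral_mono_on ht0
      ((intervalIntegrable_iff_integrableOn_Icc_of_le ht0).2 hfint)
      ((intervalIntegrable_iff_integrableOn_Icc_of_le ht0).2 hgint) bnd
  refine le_trans hmono ?_
  have habt0 : 0 < a * b - t := by linarith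
  rw [intervalIntegral.integral_const_mul]
  have hcomp : (∫ τ in (0:ℝ)..t, (a * b - τ) ^ (-(3/2) : ℝ)) =
      ∫ x in (a * b - t)..(a * b), x ^ (-(3/2) : ℝ) := by
    have hcs := intervalIntegral.integral_comp_sub_left (a := 0) (b := t)
      (fun x : ℝ => x ^ (-(3/2) : ℝ)) (a * b)
    simpa using hcs
  rw [hcomp, integral_rpow (Or.inr ⟨by norm_num,
    Set.notMem_uIcc_of_lt habt0 (by linarith [mul_pos ha hb])⟩)]
  set u : ℝ := (a * b) ^ (-(3/2) + 1 : ℝ) with hu_def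
  set v : ℝ := (a * b - t) ^ (-(3/2) + 1 : ℝ) with hv_def
  have hu0 : 0 ≤ u := Real.rpow_nonneg (by positivity) _
  have hrearr : (u - v) / (-(3/2) + 1) = 2 * (v - u) := by norm_num; ring
  rw [hrearr]
  have hstep : C0 * (2 * (v - u)) ≤ C0 * (2 * v) :=
    mul_le_mul_of_nonneg_left (by linarith) hC0
  refine le_trans hstep (le_of_eq ?_)
  have hv : v = (Real.sqrt (a * b - t))⁻¹ := by
    rw [hv_def, show (-(3/2) + 1 : ℝ) = -(1/2) by norm_num,
      Real.rpow_neg habt0.le, ← Real.sqrt_eq_rpow]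
  have hsqrt_quot : Real.sqrt (a * b / (a * b - t)) =
      Real.sqrt a * Real.sqrt b / Real.sqrt (a * b - t) := by
    rw [Real.sqrt_div (by positivity) _, Real.sqrt_mul ha.le]
  have h2pow : (2:ℝ) ^ (2 * σ + 3) = (2:ℝ) ^ (2 * σ + 2) * 2 := by
    rw [show (2 * σ + 3 : ℝ) = (2 * σ + 2) + 1 by ring, Real.rpow_add two_pos, Real.rpow_one]
  have hstt : 0 < Real.sqrt (a * b - t) := Real.sqrt_pos.2 habt0
  rw [hv, hsqrt_quot, h2pow, hC0_def]
  have hbb : Real.sqrt b * Real.sqrt b = b := Real.mul_self_sqrt hb.le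
  field_simp
  linear_combination (-K) * hbb
end
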